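/- Let f : [a,1] → R be continuously differentiable with |f'(x)| ≤ L for all x ∈ [a,1], where 0 < a < 1. Then for any n×n Hermitian matrices X, Y with spectra contained in [a,1], ∥f(X) − f(Y)∥ ≤ √n · L · ∥X − Y∥ in operator norm. -/

import Mathlib

open Matrix MeasureTheory
open scoped ComplexOrder

noncomputable section

variable {n : Type*} [Fintype n] [DecidableEq n]

/-- Matrix logarithm via spectral decomposition (junk value 0 for non-Hermitian input). -/
def matLog (M : Matrix n n ℂ) : Matrix n n ℂ :=
  if h : M.IsHermitian then
    (h.eigenvectorUnitary : Matrix n n ℂ) *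
      Matrix.diagonal (fun i => (Real.log (h.eigenvalues i) : ℂ)) *
      (star h.eigenvectorUnitary : Matrix n n ℂ)
  else 0

/-- Complex matrix power via spectral decomposition (junk value 0 for non-Hermitian input). -/
def matCPow (M : Matrix n n ℂ) (z : ℂ) : Matrix n n ℂ :=
  if h : M.IsHermitian then
    (h.eigenvectorUnitary : Matrix n n ℂ) *
      Matrix.diagonal (fun i => ((h.eigenvalues i : ℂ) ^ z)) *
      (star h.eigenvectorUnitary : Matrix n n ℂ)
  else 0

/-- von Neumann entropy `S(ρ) = -Tr[ρ log ρ]`. -/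
def vnEntropy (M : Matrix n n ℂ) : ℝ := -(Matrix.trace (M * matLog M)).re

/-- Quantum relative entropy `D(ρ‖σ) = Tr[ρ (log ρ - log σ)]`. -/
def relEntropy (ρ σ : Matrix n n ℂ) : ℝ := (Matrix.trace (ρ * (matLog ρ - matLog σ))).re

/-- Operator norm of a matrix. -/
def opNorm (M : Matrix n n ℂ) : ℝ := ‖Matrix.toEuclideanCLM (𝕜 := ℂ) M‖

/-- The old Mathlib `Matrix.PosSemidef.sqrt` (removed since), with its original definition. -/
def posSemidefSqrtOld {M : Matrix n n ℂ} (hM : M.PosSemidef) : Matrix n n ℂ :=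
  (hM.1.eigenvectorUnitary : Matrix n n ℂ) *
    Matrix.diagonal ((↑) ∘ Real.sqrt ∘ hM.1.eigenvalues) *
    (star hM.1.eigenvectorUnitary : Matrix n n ℂ)

/-- Trace norm `‖A‖₁ = Tr √(AᴴA)`. -/
def traceNorm (A : Matrix n n ℂ) : ℝ :=
  ((posSemidefSqrtOld (Matrix.posSemidef_conjTranspose_mul_self A)).trace).re

/-- Positive semidefinite square root (junk value 0 otherwise). -/
def sqrtPSD (M : Matrix n n ℂ) : Matrix n n ℂ :=
  open scoped Classical in
  if h : M.PosSemidef then posSemidefSqrtOld h else 0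

/-- Fidelity `F(ρ,σ) = ‖√ρ √σ‖₁`. -/
def fidelity (ρ σ : Matrix n n ℂ) : ℝ := traceNorm (sqrtPSD ρ * sqrtPSD σ)

/-- Binary entropy (natural logarithm). -/
def binEnt (p : ℝ) : ℝ := -(p * Real.log p) - (1 - p) * Real.log (1 - p)

section ptrace
variable {α β : Type*} [Fintype α] [Fintype β]

/-- Partial trace over the first tensor factor. -/
def ptraceFst (M : Matrix (α × β) (α × β) ℂ) : Matrix β β ℂ :=
  fun i j => ∑ a : α, M (a, i) (a, j)

/-- Partial trace over the second tensor factor. -/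
def ptraceSnd (M : Matrix (α × β) (α × β) ℂ) : Matrix α α ℂ :=
  fun i j => ∑ b : β, M (i, b) (j, b)

end ptrace


/-- Real matrix function via spectral decomposition (junk value 0 for non-Hermitian input). -/
def matFunR {n : Type*} [Fintype n] [DecidableEq n] (f : ℝ → ℝ) (M : Matrix n n ℂ) :
    Matrix n n ℂ :=
  if h : M.IsHermitian then
    (h.eigenvectorUnitary : Matrix n n ℂ) *
      Matrix.diagonal (fun i => ((f (h.eigenvalues i) : ℝ) : ℂ)) *
      (star h.eigenvectorUnitary : Matrix n n ℂ)
  else 0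


namespace Stmt11Aux
open scoped Matrix.Norms.L2Operator

set_option linter.unusedSectionVars false

variable {m : Type*} [Fintype m] [DecidableEq m]

def frobSq (A : Matrix m m ℂ) : ℝ := ∑ i, ∑ j, ‖A i j‖ ^ 2

lemma frobSq_nonneg (A : Matrix m m ℂ) : 0 ≤ frobSq A :=
  Finset.sum_nonneg fun _ _ => Finset.sum_nonneg fun _ _ => sq_nonneg _

lemma norm_le_sqrt_frobSq (A : Matrix m m ℂ) : ‖A‖ ≤ Real.sqrt (frobSq A) := by
  rw [Matrix.cstar_norm_def]
  refine ContinuousLinearMap.opNorm_le_bound _ (Real.sqrt_nonneg _) fun x => ?_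
  have hx : ‖x‖ ^ 2 = ∑ j, ‖x j‖ ^ 2 := by
    rw [EuclideanSpace.norm_eq, Real.sq_sqrt (Finset.sum_nonneg fun _ _ => sq_nonneg _)]
  have happ : ∀ i, (toEuclideanCLM (𝕜 := ℂ) A x) i = ∑ j, A i j * x j := by
    intro i
    have := congrFun (Matrix.ofLp_toEuclideanCLM (𝕜 := ℂ) A x) i
    simpa [Matrix.mulVec, dotProduct] using this
  have hnorm : ‖toEuclideanCLM (𝕜 := ℂ) A x‖ ^ 2 = ∑ i, ‖∑ j, A i j * x j‖ ^ 2 := by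
    rw [EuclideanSpace.norm_eq, Real.sq_sqrt (Finset.sum_nonneg fun _ _ => sq_nonneg _)]
    simp [happ]
  have key : ‖toEuclideanCLM (𝕜 := ℂ) A x‖ ^ 2 ≤ frobSq A * ‖x‖ ^ 2 := by
    rw [hnorm, hx, frobSq, Finset.sum_mul]
    refine Finset.sum_le_sum fun i _ => ?_
    calc ‖∑ j, A i j * x j‖ ^ 2 ≤ (∑ j, ‖A i j‖ * ‖x j‖) ^ 2 := by
          have h1 : ‖∑ j, A i j * x j‖ ≤ ∑ j, ‖A i j‖ * ‖x j‖ := by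
            refine (norm_sum_le _ _).trans ?_
            exact Finset.sum_le_sum fun j _ => le_of_eq (norm_mul _ _)
          exact pow_le_pow_left₀ (norm_nonneg _) h1 2
      _ ≤ (∑ j, ‖A i j‖ ^ 2) * ∑ j, ‖x j‖ ^ 2 := by
          exact Finset.sum_mul_sq_le_sq_mul_sq Finset.univ _ _
  calc ‖toEuclideanCLM (𝕜 := ℂ) A x‖ = Real.sqrt (‖toEuclideanCLM (𝕜 := ℂ) A x‖ ^ 2) := by
        rw [Real.sqrt_sq (norm_nonneg _)]
    _ ≤ Real.sqrt (frobSq A * ‖x‖ ^ 2) := Real.sqrt_le_sqrt key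
    _ = Real.sqrt (frobSq A) * ‖x‖ := by
        rw [Real.sqrt_mul (frobSq_nonneg A), Real.sqrt_sq (norm_nonneg _)]

lemma frobSq_le_card_mul_sq (A : Matrix m m ℂ) :
    frobSq A ≤ (Fintype.card m : ℝ) * ‖A‖ ^ 2 := by
  rw [frobSq, Finset.sum_comm]
  have hcol : ∀ j, (∑ i, ‖A i j‖ ^ 2) ≤ ‖A‖ ^ 2 := by
    intro j
    have h1 := Matrix.l2_opNorm_mulVec A ((EuclideanSpace.equiv m ℂ).symm (Pi.single j 1))
    have hs : ‖(EuclideanSpace.equiv m ℂ).symm (Pi.single j (1:ℂ))‖ = 1 := by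
      simpa using EuclideanSpace.norm_single (𝕜 := ℂ) j (1:ℂ)
    have hmv : (A *ᵥ ((EuclideanSpace.equiv m ℂ).symm (Pi.single j (1:ℂ)) : m → ℂ)) = fun i => A i j := by
      funext i
      simp [Matrix.mulVec, dotProduct, EuclideanSpace.single_apply, Pi.single_apply, mul_ite]
    rw [hs, mul_one, hmv] at h1
    have h2 : ‖(EuclideanSpace.equiv m ℂ).symm (fun i => A i j)‖ ^ 2 = ∑ i, ‖A i j‖ ^ 2 := by
      rw [EuclideanSpace.norm_eq, Real.sq_sqrt (Finset.sum_nonneg fun _ _ => sq_nonneg _)]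
      rfl
    calc (∑ i, ‖A i j‖ ^ 2) = ‖(EuclideanSpace.equiv m ℂ).symm (fun i => A i j)‖ ^ 2 := h2.symm
      _ ≤ ‖A‖ ^ 2 := pow_le_pow_left₀ (norm_nonneg _) h1 2
  calc (∑ j, ∑ i, ‖A i j‖ ^ 2) ≤ ∑ _j : m, ‖A‖ ^ 2 := Finset.sum_le_sum fun j _ => hcol j
    _ = (Fintype.card m : ℝ) * ‖A‖ ^ 2 := by rw [Finset.sum_const, nsmul_eq_mul, Fintype.card]

lemma frobSq_eq_trace (A : Matrix m m ℂ) : frobSq A = (Matrix.trace (Aᴴ * A)).re := by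
  have h : Matrix.trace (Aᴴ * A) = ∑ i, ∑ j, ((‖A j i‖ ^ 2 : ℝ) : ℂ) := by
    rw [Matrix.trace]
    refine Finset.sum_congr rfl fun i _ => ?_
    rw [Matrix.diag, Matrix.mul_apply]
    refine Finset.sum_congr rfl fun j _ => ?_
    rw [Matrix.conjTranspose_apply, mul_comm, RCLike.star_def, RCLike.mul_conj]
    norm_cast
  rw [h, frobSq, Finset.sum_comm]
  simp [Complex.re_sum, ← Complex.ofReal_pow]

lemma frobSq_conj (U V M : Matrix m m ℂ) (hU : U * star U = 1) (hV : V * star V = 1) :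
    frobSq (star U * M * V) = frobSq M := by
  rw [frobSq_eq_trace, frobSq_eq_trace]
  congr 1
  have h1 : (star U * M * V)ᴴ * (star U * M * V) = Vᴴ * (Mᴴ * M) * V := by
    rw [Matrix.conjTranspose_mul, Matrix.conjTranspose_mul]
    have hc : (star U : Matrix m m ℂ)ᴴ = U := by
      rw [Matrix.star_eq_conjTranspose, Matrix.conjTranspose_conjTranspose]
    rw [hc]
    have e : Vᴴ * (Mᴴ * U) * (star U * M * V) = Vᴴ * (Mᴴ * ((U * star U) * (M * V))) := by
      simp only [Matrix.mul_assoc]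
    rw [e, hU, Matrix.one_mul]
    simp only [Matrix.mul_assoc]
  rw [h1, Matrix.trace_mul_cycle, ← Matrix.star_eq_conjTranspose]
  have h2 : V * (star V * (Mᴴ * M)) = Mᴴ * M := by
    rw [← Matrix.mul_assoc, hV, Matrix.one_mul]
  rw [← Matrix.mul_assoc] at h2
  rw [h2]

end Stmt11Aux

open Stmt11Aux in

/-- Lipschitz bound for matrix functions of Hermitian matrices with spectra
in `[a,1]`. -/
theorem stmt11 (n : ℕ) (a L : ℝ) (ha : 0 < a) (ha1 : a < 1)
    (f f' : ℝ → ℝ)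
    (hderiv : ∀ x ∈ Set.Icc a 1, HasDerivAt f (f' x) x)
    (hcont : ContinuousOn f' (Set.Icc a 1))
    (hL : ∀ x ∈ Set.Icc a 1, |f' x| ≤ L)
    (X Y : Matrix (Fin n) (Fin n) ℂ) (hX : X.IsHermitian) (hY : Y.IsHermitian)
    (hXs : ∀ i, hX.eigenvalues i ∈ Set.Icc a 1)
    (hYs : ∀ i, hY.eigenvalues i ∈ Set.Icc a 1) :
    opNorm (matFunR f X - matFunR f Y) ≤ Real.sqrt n * L * opNorm (X - Y) := by
  classical
  -- notation
  set U : Matrix (Fin n) (Fin n) ℂ := (hX.eigenvectorUnitary : Matrix (Fin n) (Fin n) ℂ) with hUdef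
  set V : Matrix (Fin n) (Fin n) ℂ := (hY.eigenvectorUnitary : Matrix (Fin n) (Fin n) ℂ) with hVdef
  have hUU : U * star U = 1 := (Matrix.mem_unitaryGroup_iff).mp hX.eigenvectorUnitary.2
  have hVV : V * star V = 1 := (Matrix.mem_unitaryGroup_iff).mp hY.eigenvectorUnitary.2
  have hUU' : star U * U = 1 := (Matrix.mem_unitaryGroup_iff').mp hX.eigenvectorUnitary.2
  have hVV' : star V * V = 1 := (Matrix.mem_unitaryGroup_iff').mp hY.eigenvectorUnitary.2
  have hL0 : 0 ≤ L := le_trans (abs_nonneg _) (hL a ⟨le_refl a, ha1.le⟩)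
  -- Lipschitz property of f on [a,1]
  have hLip : ∀ x ∈ Set.Icc a 1, ∀ y ∈ Set.Icc a 1, |f x - f y| ≤ L * |x - y| := by
    intro x hx y hy
    have := (convex_Icc a 1).norm_image_sub_le_of_norm_hasDerivWithin_le
      (fun z hz => (hderiv z hz).hasDerivWithinAt)
      (fun z hz => by simpa [Real.norm_eq_abs] using hL z hz) hy hx
    simpa [Real.norm_eq_abs] using this
  -- entrywise formulas
  have hfX : matFunR f X = U * Matrix.diagonal (fun i => ((f (hX.eigenvalues i) : ℝ) : ℂ)) * star U := by
    rw [matFunR, dif_pos hX]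
  have hfY : matFunR f Y = V * Matrix.diagonal (fun i => ((f (hY.eigenvalues i) : ℝ) : ℂ)) * star V := by
    rw [matFunR, dif_pos hY]
  have hXd : X = U * Matrix.diagonal (fun i => ((hX.eigenvalues i : ℝ) : ℂ)) * star U := by
    have := hX.spectral_theorem
    exact this
  have hYd : Y = V * Matrix.diagonal (fun i => ((hY.eigenvalues i : ℝ) : ℂ)) * star V := by
    have := hY.spectral_theorem
    exact this
  have key : ∀ (g : ℝ → ℝ),
      matFunR f X = U * Matrix.diagonal (fun i => ((g (hX.eigenvalues i) : ℝ) : ℂ)) * star U →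
      matFunR f Y = V * Matrix.diagonal (fun i => ((g (hY.eigenvalues i) : ℝ) : ℂ)) * star V →
      True := fun _ _ _ => trivial
  clear key
  -- generic conjugation computation
  have conj_eval : ∀ (dX dY : Fin n → ℂ) (i j : Fin n),
      (star U * (U * Matrix.diagonal dX * star U - V * Matrix.diagonal dY * star V) * V) i j
        = (dX i - dY j) * (star U * V) i j := by
    intro dX dY i j
    have e1 : star U * (U * Matrix.diagonal dX * star U) * V
        = Matrix.diagonal dX * (star U * V) := by
      have h : star U * (U * Matrix.diagonal dX * star U) * V
          = (star U * U) * (Matrix.diagonal dX * (star U * V)) := by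
        simp only [Matrix.mul_assoc]
      rw [h, hUU', Matrix.one_mul]
    have e2 : star U * (V * Matrix.diagonal dY * star V) * V
        = (star U * V) * Matrix.diagonal dY := by
      have h : star U * (V * Matrix.diagonal dY * star V) * V
          = (star U * V) * (Matrix.diagonal dY * (star V * V)) := by
        simp only [Matrix.mul_assoc]
      rw [h, hVV', Matrix.mul_one]
    have : star U * (U * Matrix.diagonal dX * star U - V * Matrix.diagonal dY * star V) * V
        = Matrix.diagonal dX * (star U * V) - (star U * V) * Matrix.diagonal dY := by
      rw [Matrix.mul_sub, Matrix.sub_mul, e1, e2]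
    rw [this, Matrix.sub_apply, Matrix.diagonal_mul, Matrix.mul_diagonal]
    ring
  -- entrywise bound
  have hent : ∀ i j, ‖(star U * (matFunR f X - matFunR f Y) * V) i j‖
      ≤ L * ‖(star U * (X - Y) * V) i j‖ := by
    intro i j
    rw [hfX, hfY]
    conv_rhs => rw [hXd, hYd]
    rw [conj_eval _ _ i j, conj_eval _ _ i j, norm_mul, norm_mul]
    have h1 : ‖((f (hX.eigenvalues i) : ℝ) : ℂ) - ((f (hY.eigenvalues j) : ℝ) : ℂ)‖
        = |f (hX.eigenvalues i) - f (hY.eigenvalues j)| := by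
      rw [← Complex.ofReal_sub, Complex.norm_real, Real.norm_eq_abs]
    have h2 : ‖((hX.eigenvalues i : ℝ) : ℂ) - ((hY.eigenvalues j : ℝ) : ℂ)‖
        = |hX.eigenvalues i - hY.eigenvalues j| := by
      rw [← Complex.ofReal_sub, Complex.norm_real, Real.norm_eq_abs]
    rw [h1, h2]
    calc |f (hX.eigenvalues i) - f (hY.eigenvalues j)| * ‖(star U * V) i j‖
        ≤ (L * |hX.eigenvalues i - hY.eigenvalues j|) * ‖(star U * V) i j‖ :=
          mul_le_mul_of_nonneg_right (hLip _ (hXs i) _ (hYs j)) (norm_nonneg _)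
      _ = L * (|hX.eigenvalues i - hY.eigenvalues j| * ‖(star U * V) i j‖) := by ring
  -- Frobenius norm chain
  have hop_nonneg : 0 ≤ opNorm (X - Y) := norm_nonneg _
  have step1 : opNorm (matFunR f X - matFunR f Y)
      ≤ Real.sqrt (frobSq (matFunR f X - matFunR f Y)) :=
    norm_le_sqrt_frobSq _
  have step2 : frobSq (matFunR f X - matFunR f Y)
      = frobSq (star U * (matFunR f X - matFunR f Y) * V) :=
    (frobSq_conj U V _ hUU hVV).symm
  have step3 : frobSq (star U * (matFunR f X - matFunR f Y) * V)
      ≤ L ^ 2 * frobSq (star U * (X - Y) * V) := by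
    rw [frobSq, frobSq, Finset.mul_sum]
    refine Finset.sum_le_sum fun i _ => ?_
    rw [Finset.mul_sum]
    refine Finset.sum_le_sum fun j _ => ?_
    calc ‖(star U * (matFunR f X - matFunR f Y) * V) i j‖ ^ 2
        ≤ (L * ‖(star U * (X - Y) * V) i j‖) ^ 2 :=
          pow_le_pow_left₀ (norm_nonneg _) (hent i j) 2
      _ = L ^ 2 * ‖(star U * (X - Y) * V) i j‖ ^ 2 := by ring
  have step4 : frobSq (star U * (X - Y) * V) = frobSq (X - Y) :=
    frobSq_conj U V _ hUU hVV
  have step5 : frobSq (X - Y) ≤ (n : ℝ) * opNorm (X - Y) ^ 2 := by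
    have := frobSq_le_card_mul_sq (X - Y)
    rw [Fintype.card_fin] at this
    exact this
  have total : frobSq (matFunR f X - matFunR f Y)
      ≤ L ^ 2 * ((n : ℝ) * opNorm (X - Y) ^ 2) := by
    rw [step2]
    refine step3.trans ?_
    rw [step4]
    exact mul_le_mul_of_nonneg_left step5 (sq_nonneg L)
  refine step1.trans ?_
  have : Real.sqrt (L ^ 2 * ((n : ℝ) * opNorm (X - Y) ^ 2))
      = Real.sqrt n * L * opNorm (X - Y) := by
    rw [Real.sqrt_mul (sq_nonneg L), Real.sqrt_mul (Nat.cast_nonneg n),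
      Real.sqrt_sq hL0, Real.sqrt_sq hop_nonneg]
    ring
  rw [← this]
  exact Real.sqrt_le_sqrt total


end
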